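/- Let K ≥ 2 be an integer and N an even natural number. Over nonnegative integer variables n_1, …, n_K satisfying Σ_{k=1}^{K} n_k = N, the greatest value of Σ_{k=2}^{K} n_k n_{k−1} + n_K is N(N+2)/4, attained at n_k = 0 for all k ≤ K−2 and n_{K−1} = n_K = N/2. -/

import Mathlib

lemma qp_helper (a b m : ℕ) (h : a + b = 2*m+1) : a * b ≤ m * (m+1) := by
  rcases le_or_gt a m with h1 | h1
  · nlinarith
  · nlinarith

/-- For `K ≥ 2` and an even natural number `N`, the greatest value of
`Σ_{k=2}^K n_k n_{k-1} + n_K` over natural numbers `n_1, …, n_K` summing to `N`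
is `N(N+2)/4`, attained at `n_k = 0` for `k ≤ K-2` and `n_{K-1} = n_K = N/2`. -/
theorem qp_max_nat_even (K : ℕ) (hK : 2 ≤ K) (N : ℕ) (heven : Even N)
    (x : ℕ → ℕ)
    (hxdef : ∀ k, x k = if k = K then N / 2 else if k = K - 1 then N / 2 else 0) :
    IsGreatest
      {v : ℕ | ∃ y : ℕ → ℕ, (∑ k ∈ Finset.Icc 1 K, y k) = N ∧
        v = (∑ k ∈ Finset.Icc 2 K, y k * y (k - 1)) + y K}
      (N * (N + 2) / 4) ∧
    (∑ k ∈ Finset.Icc 1 K, x k) = N ∧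
    (∑ k ∈ Finset.Icc 2 K, x k * x (k - 1)) + x K = N * (N + 2) / 4 := by
  obtain ⟨m, hm⟩ := heven
  have hN : N = 2*m := by omega
  have hhalf : N / 2 = m := by omega
  have hval : N * (N + 2) / 4 = m * (m+1) := by
    subst hN
    rw [show 2*m*(2*m+2) = 4*(m*(m+1)) by ring]
    omega
  -- sum of x equals N
  have hsum1 : (∑ k ∈ Finset.Icc 1 K, x k) = N := by
    have hsub : ({K-1, K} : Finset ℕ) ⊆ Finset.Icc 1 K := by
      intro a ha
      simp only [Finset.mem_insert, Finset.mem_singleton] at ha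
      simp only [Finset.mem_Icc]
      omega
    rw [← Finset.sum_subset hsub (by
      intro a _ hna
      simp only [Finset.mem_insert, Finset.mem_singleton, not_or] at hna
      rw [hxdef, if_neg hna.2, if_neg hna.1])]
    rw [Finset.sum_pair (by omega : K - 1 ≠ K)]
    rw [hxdef (K-1), hxdef K, if_neg (by omega : K - 1 ≠ K), if_pos rfl, if_pos rfl]
    omega
  -- value of objective at x
  have hsum2 : (∑ k ∈ Finset.Icc 2 K, x k * x (k - 1)) + x K = m * (m+1) := by
    have hsub : ({K} : Finset ℕ) ⊆ Finset.Icc 2 K := by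
      intro a ha
      simp only [Finset.mem_singleton] at ha
      simp only [Finset.mem_Icc]
      omega
    rw [← Finset.sum_subset hsub (by
      intro a ha hna
      simp only [Finset.mem_singleton] at hna
      simp only [Finset.mem_Icc] at ha
      rw [hxdef a, hxdef (a-1)]
      split_ifs with h1 h2 h3 h4 <;> first | omega | simp)]
    rw [Finset.sum_singleton]
    rw [hxdef K, hxdef (K-1), if_pos rfl, if_neg (by omega : K - 1 ≠ K), if_pos rfl, hhalf]
    ring
  refine ⟨⟨⟨x, hsum1, ?_⟩, ?_⟩, hsum1, by rw [hsum2, hval]⟩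
  · rw [hsum2, hval]
  · rintro v ⟨y, hy, rfl⟩
    rw [hval]
    set P := (Finset.Icc 1 K).filter (fun k => k % 2 = K % 2) with hP
    set Q := (Finset.Icc 1 K).filter (fun k => ¬ k % 2 = K % 2) with hQ
    have hAB : (∑ k ∈ P, y k) + (∑ k ∈ Q, y k) = N := by
      rw [← hy, hP, hQ]
      exact Finset.sum_filter_add_sum_filter_not _ _ _
    set g : ℕ → ℕ × ℕ := fun k => if k % 2 = K % 2 then (k-1, k) else (k, k-1) with hg
    have himg : ((Finset.Icc 2 K).image g) ⊆ Q ×ˢ P := by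
      intro p hp
      simp only [Finset.mem_image] at hp
      obtain ⟨k, hk, rfl⟩ := hp
      simp only [Finset.mem_Icc] at hk
      by_cases h : k % 2 = K % 2
      · have hgk : g k = (k-1, k) := by rw [hg]; simp [h]
        rw [hgk]
        simp only [Finset.mem_product, hP, hQ, Finset.mem_filter, Finset.mem_Icc]
        omega
      · have hgk : g k = (k, k-1) := by rw [hg]; simp [h]
        rw [hgk]
        simp only [Finset.mem_product, hP, hQ, Finset.mem_filter, Finset.mem_Icc]
        omega
    have hinj : ∀ a ∈ Finset.Icc 2 K, ∀ b ∈ Finset.Icc 2 K, g a = g b → a = b := by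
      intro a ha b hb hab
      simp only [Finset.mem_Icc] at ha hb
      simp only [hg] at hab
      split_ifs at hab <;> simp only [Prod.mk.injEq] at hab <;> omega
    have hsum_eq : (∑ k ∈ Finset.Icc 2 K, y k * y (k-1))
        = ∑ p ∈ (Finset.Icc 2 K).image g, y p.1 * y p.2 := by
      rw [Finset.sum_image hinj]
      apply Finset.sum_congr rfl
      intro k _
      by_cases h : k % 2 = K % 2
      · have hgk : g k = (k-1, k) := by rw [hg]; simp [h]
        rw [hgk]; exact mul_comm _ _
      · have hgk : g k = (k, k-1) := by rw [hg]; simp [h]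
        rw [hgk]
    have hle1 : (∑ p ∈ (Finset.Icc 2 K).image g, y p.1 * y p.2)
        ≤ ∑ p ∈ Q ×ˢ P, y p.1 * y p.2 :=
      Finset.sum_le_sum_of_subset himg
    have hprod : (∑ p ∈ Q ×ˢ P, y p.1 * y p.2)
        = (∑ k ∈ Q, y k) * (∑ k ∈ P, y k) := by
      rw [Finset.sum_mul_sum]
      rw [Finset.sum_product]
    have hKP : K ∈ P := by
      rw [hP]
      exact Finset.mem_filter.mpr ⟨Finset.mem_Icc.mpr ⟨by omega, le_refl K⟩, rfl⟩
    have hyK : y K ≤ ∑ k ∈ P, y k :=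
      Finset.single_le_sum (fun _ _ => Nat.zero_le _) hKP
    calc (∑ k ∈ Finset.Icc 2 K, y k * y (k-1)) + y K
        ≤ (∑ k ∈ Q, y k) * (∑ k ∈ P, y k) + (∑ k ∈ P, y k) := by
          rw [hsum_eq]
          exact add_le_add (hprod ▸ hle1) hyK
      _ = (∑ k ∈ P, y k) * ((∑ k ∈ Q, y k) + 1) := by ring
      _ ≤ m * (m+1) := qp_helper (∑ k ∈ P, y k) ((∑ k ∈ Q, y k) + 1) m (by omega)
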